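/- Let x > 0 and 1 < a < b < M+1. Then dim_H Φ_x(𝒰(x) ∩ (a, b)) / log b ≤ dim_H(𝒰(x) ∩ (a, b)) ≤ dim_H Φ_x(𝒰(x) ∩ (a, b)) / log a, where the dimension of 𝒰(x) ∩ (a,b) ⊆ ℝ is with respect to the Euclidean metric, the dimension of its image under Φ_x is with respect to the metric ρ, and logarithms are taken to base M+1. -/

import Mathlib

open scoped ENNReal NNReal Classical

namespace Expansions

/-- Digit sequences over the alphabet `{0,1,…,M}`; index `i : ℕ` represents the
`(i+1)`-st digit `d_{i+1}` of the paper. -/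
abbrev Digits (M : ℕ) := ℕ → Fin (M + 1)

/-- `π_q((d_i)) = Σ_{i≥1} d_i / q^i`. -/
noncomputable def piQ (M : ℕ) (q : ℝ) (d : Digits M) : ℝ :=
  ∑' i : ℕ, (d i : ℝ) / q ^ (i + 1)

/-- `𝒰_q` : the set of real numbers having a unique `q`-expansion. -/
def Uq (M : ℕ) (q : ℝ) : Set ℝ := {x | ∃! d : Digits M, piQ M q d = x}

/-- `𝐔_q` : the set of sequences that are the unique `q`-expansion of their value. -/
def UqSym (M : ℕ) (q : ℝ) : Set (Digits M) :=
  {d | ∀ e : Digits M, piQ M q e = piQ M q d → e = d}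

/-- `𝒰(x)` : the set of univoque bases of `x`. -/
def Ubases (M : ℕ) (x : ℝ) : Set ℝ :=
  {q | q ∈ Set.Ioc (1 : ℝ) ((M : ℝ) + 1) ∧ x ∈ Uq M q}

/-- `q_x = min{M+1, 1+M/x}`. -/
noncomputable def qx (M : ℕ) (x : ℝ) : ℝ := min ((M : ℝ) + 1) (1 + (M : ℝ) / x)

/-- Strict lexicographic order on digit sequences. -/
def lexLt {M : ℕ} (c d : Digits M) : Prop := ∃ n, (∀ i < n, c i = d i) ∧ c n < d n

def lexLe {M : ℕ} (c d : Digits M) : Prop := c = d ∨ lexLt c d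

/-- The sequence ends with `0^∞`. -/
def EndsInZero {M : ℕ} (d : Digits M) : Prop := ∃ N, ∀ n ≥ N, d n = 0

/-- `d` is the quasi-greedy `q`-expansion of `x`: the lexicographically largest
`q`-expansion of `x` not ending with `0^∞`. -/
def IsQuasiGreedy (M : ℕ) (q x : ℝ) (d : Digits M) : Prop :=
  piQ M q d = x ∧ ¬ EndsInZero d ∧
    ∀ e : Digits M, piQ M q e = x → ¬ EndsInZero e → lexLe e d

/-- `Φ_x(q)`: the quasi-greedy `q`-expansion of `x` (junk value if none exists). -/
noncomputable def Phi (M : ℕ) (x q : ℝ) : Digits M :=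
  if h : ∃ d : Digits M, IsQuasiGreedy M q x d then h.choose else fun _ => 0

/-- `𝐔(x) = {Φ_x(q) : q ∈ 𝒰(x)}`. -/
def UxSym (M : ℕ) (x : ℝ) : Set (Digits M) := (Phi M x) '' (Ubases M x)

/-- `ρ((c_i),(d_i)) = (M+1)^{-inf{i ≥ 1 : c_i ≠ d_i}}` (our index `n` represents the
`(n+1)`-st digit, whence the exponent `-(n+1)`); `ρ(c,c) = 0`. -/
noncomputable def rho (M : ℕ) (c d : Digits M) : ℝ :=
  if c = d then 0
  else ((M : ℝ) + 1) ^ (-(((sInf {i | c i ≠ d i} : ℕ) : ℤ) + 1))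

/-- Diameter of a set with respect to a distance function, valued in `ℝ≥0∞`. -/
noncomputable def gdiam {X : Type*} (dist : X → X → ℝ) (A : Set X) : ℝ≥0∞ :=
  ⨆ x ∈ A, ⨆ y ∈ A, ENNReal.ofReal (dist x y)

/-- The `s`-dimensional Hausdorff outer measure with respect to a distance function:
`lim_{δ→0⁺} inf {Σ diam(C n)^s : A ⊆ ⋃ C n, diam (C n) ≤ δ}`. -/
noncomputable def gHMeasure {X : Type*} (dist : X → X → ℝ) (s : ℝ) (A : Set X) : ℝ≥0∞ :=
  ⨆ (δ : ℝ) (_ : 0 < δ),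
    ⨅ (C : ℕ → Set X) (_ : A ⊆ ⋃ n, C n)
      (_ : ∀ n, gdiam dist (C n) ≤ ENNReal.ofReal δ),
      ∑' n, gdiam dist (C n) ^ s

/-- Hausdorff dimension with respect to a distance function. -/
noncomputable def gdimH {X : Type*} (dist : X → X → ℝ) (A : Set X) : ℝ≥0∞ :=
  ⨆ (s : ℝ≥0) (_ : gHMeasure dist (s : ℝ) A = ⊤), (s : ℝ≥0∞)

/-- The generalized golden ratio `q_G`. -/
noncomputable def qG (M : ℕ) : ℝ :=
  if M % 2 = 0 then ((M / 2 : ℕ) : ℝ) + 1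
  else (((M / 2 : ℕ) : ℝ) + 1 +
    Real.sqrt (((M / 2 : ℕ) : ℝ) ^ 2 + 6 * ((M / 2 : ℕ) : ℝ) + 5)) / 2

/-- `x_G = M/(q_G - 1)`. -/
noncomputable def xG (M : ℕ) : ℝ := (M : ℝ) / (qG M - 1)

/-- The Komornik–Loreti constant `q_KL = min 𝒰(1)`. -/
noncomputable def qKL (M : ℕ) : ℝ := sInf (Ubases M 1)

/-- `x_KL = M/(q_KL - 1)`. -/
noncomputable def xKL (M : ℕ) : ℝ := (M : ℝ) / (qKL M - 1)

/-- `X_iso`: the set of `x > 0` such that `𝒰(x)` contains an isolated point. -/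
def Xiso (M : ℕ) : Set ℝ :=
  {x | 0 < x ∧ ∃ q ∈ Ubases M x, ∃ ε > 0, Ubases M x ∩ Set.Ioo (q - ε) (q + ε) = {q}}

/-- The bifurcation set `𝒱 = {q ∈ (1,M+1] : 𝐔_r ≠ 𝐔_q for all r > q}`. -/
def Vset (M : ℕ) : Set ℝ :=
  {q | q ∈ Set.Ioc (1 : ℝ) ((M : ℝ) + 1) ∧
    ∀ r ∈ Set.Ioc (1 : ℝ) ((M : ℝ) + 1), q < r → UqSym M r ≠ UqSym M q}

/-- The Thue–Morse sequence `τ_i` = parity of the binary digit sum of `i`. -/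
def tm (i : ℕ) : ℕ := (Nat.digits 2 i).sum % 2


open MeasureTheory

section SecA

variable {M : ℕ} {a b p q x y : ℝ} {d e : Digits M}

lemma digit_le (d : Digits M) (i : ℕ) : (d i : ℝ) ≤ (M : ℝ) := by
  exact_mod_cast Fin.is_le (d i)

lemma digit_nonneg (d : Digits M) (i : ℕ) : (0:ℝ) ≤ (d i : ℝ) := by positivity

lemma summable_piQ (hq : 1 < q) (d : Digits M) :
    Summable (fun i : ℕ => (d i : ℝ) / q ^ (i + 1)) := by
  have h0 : 0 < q := by linarith
  have hr0 : (0:ℝ) ≤ 1/q := by positivity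
  have hr1 : 1/q < 1 := by rw [div_lt_one h0]; exact hq
  have hg : Summable (fun i : ℕ => (M:ℝ) * (1/q) * (1/q)^i) :=
    (summable_geometric_of_lt_one hr0 hr1).mul_left _
  refine Summable.of_nonneg_of_le (fun i => by positivity) (fun i => ?_) hg
  have h1 : (d i : ℝ)/q^(i+1) ≤ (M:ℝ)/q^(i+1) :=
    (div_le_div_iff_of_pos_right (by positivity)).mpr (digit_le d i)
  refine h1.trans (le_of_eq ?_)
  ring

lemma summable_bound (hq : 1 < q) (k : ℕ) :
    Summable (fun i : ℕ => (M:ℝ) / q ^ (i + k + 1)) := by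
  have h0 : 0 < q := by linarith
  have hr0 : (0:ℝ) ≤ 1/q := by positivity
  have hr1 : 1/q < 1 := by rw [div_lt_one h0]; exact hq
  have hg : Summable (fun i : ℕ => ((M:ℝ) * (1/q)^(k+1)) * (1/q)^i) :=
    (summable_geometric_of_lt_one hr0 hr1).mul_left _
  refine hg.congr fun i => ?_
  ring

lemma piQ_nonneg (hq : 0 < q) (d : Digits M) : 0 ≤ piQ M q d :=
  tsum_nonneg fun i => by positivity

lemma tsum_geom_tail (hq : 1 < q) (k : ℕ) :
    ∑' i : ℕ, (M:ℝ) / q ^ (i + k + 1) = (M:ℝ) / (q - 1) / q ^ k := by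
  have h0 : 0 < q := by linarith
  have hr0 : (0:ℝ) ≤ 1/q := by positivity
  have hr1 : 1/q < 1 := by rw [div_lt_one h0]; exact hq
  have hg := tsum_geometric_of_lt_one hr0 hr1
  have : (fun i : ℕ => (M:ℝ) / q ^ (i + k + 1))
      = fun i : ℕ => ((M:ℝ) * (1/q)^(k+1)) * (1/q)^i := by
    funext i
    ring
  rw [this, tsum_mul_left, hg]
  have hq1 : q - 1 ≠ 0 := by linarith
  have hq0' : q ≠ 0 := by linarith
  rw [show (1:ℝ) - 1/q = (q-1)/q by field_simp]
  rw [inv_div, one_div_pow, pow_succ]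
  field_simp

lemma piQ_le (hq : 1 < q) (d : Digits M) : piQ M q d ≤ (M:ℝ) / (q - 1) := by
  have h := Summable.tsum_le_tsum (f := fun i : ℕ => (d i : ℝ)/q^(i+1))
    (g := fun i : ℕ => (M:ℝ)/q^(i+1))
    (fun i => (div_le_div_iff_of_pos_right (by positivity)).mpr (digit_le d i))
    (summable_piQ hq d) (by simpa using summable_bound (M := M) hq 0)
  calc piQ M q d ≤ ∑' i : ℕ, (M:ℝ)/q^(i+1) := h
    _ = (M:ℝ)/(q-1)/q^0 := by simpa using tsum_geom_tail (M := M) hq 0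
    _ = (M:ℝ)/(q-1) := by simp


def shiftSeq (k : ℕ) (d : Digits M) : Digits M := fun i => d (k + i)

lemma shiftSeq_shiftSeq (k l : ℕ) (d : Digits M) :
    shiftSeq k (shiftSeq l d) = shiftSeq (l + k) d := by
  funext i; unfold shiftSeq; congr 1; omega

lemma piQ_zero_of (h : ∀ i, d i = 0) : piQ M q d = 0 := by
  simp [piQ, fun i => h i]

lemma piQ_shift_one (hq : 1 < q) (d : Digits M) :
    piQ M q d = (d 0 : ℝ)/q + piQ M q (shiftSeq 1 d) / q := by
  have hs := summable_piQ hq d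
  have h0 : (0:ℝ) < q := by linarith
  rw [piQ, Summable.tsum_eq_zero_add hs]
  congr 1
  · simp
  · rw [piQ, ← tsum_div_const]
    apply tsum_congr; intro i
    show (d (i+1) : ℝ)/q^(i+1+1) = (d (1+i) : ℝ)/q^(i+1)/q
    rw [Nat.add_comm 1 i, div_div, ← pow_succ]

lemma piQ_shift (hq : 1 < q) (d : Digits M) (k : ℕ) :
    piQ M q d = (∑ i ∈ Finset.range k, (d i : ℝ)/q^(i+1)) + piQ M q (shiftSeq k d) / q^k := by
  have h0 : (0:ℝ) < q := by linarith
  induction k with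
  | zero =>
    rw [show shiftSeq 0 d = d from funext fun i => by simp [shiftSeq]]
    simp
  | succ k ih =>
    rw [ih, Finset.sum_range_succ]
    have h1 : piQ M q (shiftSeq k d) = (d k : ℝ)/q + piQ M q (shiftSeq (k+1) d)/q := by
      have h2 := piQ_shift_one hq (shiftSeq k d)
      rw [shiftSeq_shiftSeq] at h2
      simpa [shiftSeq] using h2
    rw [h1]
    have hqne : q ≠ 0 := ne_of_gt h0
    field_simp
    ring

lemma inv_pow_sub_le (hp : 1 < p) (hpq : p ≤ q) (n : ℕ) :
    1/p^(n+1) - 1/q^(n+1) ≤ (q - p) * ((n:ℝ)+1) / p^(n+1) := by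
  have hq : 1 < q := lt_of_lt_of_le hp hpq
  have hp0 : (0:ℝ) < p := by linarith
  have hq0 : (0:ℝ) < q := by linarith
  have hgeom := geom_sum₂_mul q p (n+1)
  simp only [Nat.add_sub_cancel] at hgeom
  have hSle : (∑ i ∈ Finset.range (n+1), q^i * p^(n - i)) ≤ ((n:ℝ)+1) * q^n := by
    have : ∀ i ∈ Finset.range (n+1), q^i * p^(n-i) ≤ q^n := by
      intro i hi
      have hi' : i ≤ n := Nat.lt_succ_iff.mp (Finset.mem_range.mp hi)
      calc q^i * p^(n-i) ≤ q^i * q^(n-i) := by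
            apply mul_le_mul_of_nonneg_left (pow_le_pow_left₀ (le_of_lt hp0) hpq _) (by positivity)
        _ = q^n := by rw [← pow_add]; congr 1; omega
    calc (∑ i ∈ Finset.range (n+1), q^i * p^(n - i)) ≤ ∑ _i ∈ Finset.range (n+1), q^n :=
          Finset.sum_le_sum this
      _ = ((n:ℝ)+1) * q^n := by
          rw [Finset.sum_const, Finset.card_range, nsmul_eq_mul]
          push_cast
          ring
  have hnum : q^(n+1) - p^(n+1) ≤ (q-p) * (((n:ℝ)+1) * q^n) := by
    rw [← hgeom]
    rw [mul_comm]
    apply mul_le_mul_of_nonneg_left hSle (by linarith)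
  have e1 : 1/p^(n+1) - 1/q^(n+1) = (q^(n+1) - p^(n+1))/(p^(n+1)*q^(n+1)) := by
    field_simp
  rw [e1]
  calc (q^(n+1) - p^(n+1))/(p^(n+1)*q^(n+1))
      ≤ ((q-p) * (((n:ℝ)+1) * q^n))/(p^(n+1)*q^(n+1)) := by
        apply div_le_div_of_nonneg_right hnum (by positivity) |>.trans_eq rfl
    _ = (q - p) * ((n:ℝ)+1) / (p^(n+1) * q) := by
        rw [pow_succ]
        field_simp
        ring
    _ = (q - p) * ((n:ℝ)+1) / p^(n+1) / q := by rw [div_div]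
    _ ≤ (q - p) * ((n:ℝ)+1) / p^(n+1) := by
        apply div_le_self _ (le_of_lt hq)
        have : (0:ℝ) ≤ (q - p) * ((n:ℝ)+1) := mul_nonneg (by linarith) (by positivity)
        positivity
  
lemma inv_pow_sub_ge (hp : 1 < p) (hpq : p ≤ q) (n : ℕ) :
    (q - p) / q^(n+2) ≤ 1/p^(n+1) - 1/q^(n+1) := by
  have hq : 1 < q := lt_of_lt_of_le hp hpq
  have hp0 : (0:ℝ) < p := by linarith
  have hq0 : (0:ℝ) < q := by linarith
  have hgeom := geom_sum₂_mul q p (n+1)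
  simp only [Nat.add_sub_cancel] at hgeom
  have hSge : p^n ≤ (∑ i ∈ Finset.range (n+1), q^i * p^(n - i)) := by
    have h0 : q^0 * p^(n-0) = p^n := by simp
    calc (p:ℝ)^n = q^0 * p^(n-0) := h0.symm
      _ ≤ ∑ i ∈ Finset.range (n+1), q^i * p^(n - i) := by
          apply Finset.single_le_sum (f := fun i => q^i * p^(n-i)) (fun i _ => by positivity)
          simp
  have hnum : (q-p) * p^n ≤ q^(n+1) - p^(n+1) := by
    rw [← hgeom]
    calc (q-p) * p^n = p^n * (q-p) := mul_comm _ _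
      _ ≤ (∑ i ∈ Finset.range (n+1), q^i * p^(n - i)) * (q - p) :=
          mul_le_mul_of_nonneg_right hSge (by linarith)
  have e1 : 1/p^(n+1) - 1/q^(n+1) = (q^(n+1) - p^(n+1))/(p^(n+1)*q^(n+1)) := by
    field_simp
  rw [e1]
  have e2 : ((q-p) * p^n)/(p^(n+1)*q^(n+1)) = (q-p)/(p*q^(n+1)) := by
    rw [pow_succ]
    field_simp
  calc (q - p)/q^(n+2) ≤ (q-p)/(p*q^(n+1)) := by
        have hd : p * q^(n+1) ≤ q^(n+2) := by
          calc p * q^(n+1) ≤ q * q^(n+1) := mul_le_mul_of_nonneg_right hpq (by positivity)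
            _ = q^(n+2) := by ring
        rw [div_le_div_iff₀ (by positivity) (by positivity)]
        apply mul_le_mul_of_nonneg_left hd (by linarith)
    _ = ((q-p) * p^n)/(p^(n+1)*q^(n+1)) := e2.symm
    _ ≤ (q^(n+1) - p^(n+1))/(p^(n+1)*q^(n+1)) := by
        apply div_le_div_of_nonneg_right hnum (by positivity)


lemma summable_LSum (ha : 1 < a) :
    Summable (fun i : ℕ => ((i:ℝ)+1) * (1/a)^(i+1)) := by
  have h0 : (0:ℝ) < a := by linarith
  have hr : ‖(1/a : ℝ)‖ < 1 := by
    rw [Real.norm_eq_abs, abs_of_pos (by positivity), div_lt_one h0]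
    exact ha
  have h := summable_pow_mul_geometric_of_norm_lt_one 1 hr
  have h2 := h.comp_injective Nat.succ_injective
  refine h2.congr fun i => ?_
  simp only [Function.comp, pow_one, Nat.succ_eq_add_one]
  push_cast
  ring

lemma LSum_pos (ha : 1 < a) : 0 < ∑' i : ℕ, ((i:ℝ)+1) * (1/a)^(i+1) := by
  have h0 : (0:ℝ) < a := by linarith
  have h := Summable.le_tsum (summable_LSum ha) 0 (fun j _ => by positivity)
  have h1 : (0:ℝ) < (((0:ℕ):ℝ)+1) * (1/a)^(0+1) := by positivity
  linarith

lemma term_anti (hp : 1 < p) (hpq : p ≤ q) (d : Digits M) (i : ℕ) :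
    (d i : ℝ)/q^(i+1) ≤ (d i : ℝ)/p^(i+1) := by
  have hp0 : (0:ℝ) < p := by linarith
  rw [div_eq_mul_one_div ((d i : ℝ)) (q^(i+1)), div_eq_mul_one_div ((d i : ℝ)) (p^(i+1))]
  apply mul_le_mul_of_nonneg_left _ (by positivity)
  apply one_div_le_one_div_of_le (by positivity)
  exact pow_le_pow_left₀ (le_of_lt hp0) hpq _

lemma piQ_anti (hp : 1 < p) (hpq : p ≤ q) (d : Digits M) : piQ M q d ≤ piQ M p d := by
  have hq : 1 < q := lt_of_lt_of_le hp hpq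
  exact Summable.tsum_le_tsum (fun i => term_anti hp hpq d i) (summable_piQ hq d) (summable_piQ hp d)

lemma termwise_sub (hp : 1 < p) (hpq : p ≤ q) (d : Digits M) (i : ℕ) :
    (d i : ℝ)/p^(i+1) - (d i : ℝ)/q^(i+1) = (d i : ℝ) * (1/p^(i+1) - 1/q^(i+1)) := by
  ring

lemma piQ_sub_eq (hp : 1 < p) (hpq : p ≤ q) (d : Digits M) :
    piQ M p d - piQ M q d = ∑' i : ℕ, ((d i : ℝ)/p^(i+1) - (d i : ℝ)/q^(i+1)) := by
  have hq : 1 < q := lt_of_lt_of_le hp hpq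
  rw [Summable.tsum_sub (summable_piQ hp d) (summable_piQ hq d)]
  rfl

lemma piQ_sub_le (ha : 1 < a) (hap : a ≤ p) (hpq : p ≤ q) (d : Digits M) :
    piQ M p d - piQ M q d ≤ (q - p) * ((M:ℝ) * ∑' i : ℕ, ((i:ℝ)+1) * (1/a)^(i+1)) := by
  have hp : 1 < p := lt_of_lt_of_le ha hap
  have hq : 1 < q := lt_of_lt_of_le hp hpq
  have ha0 : (0:ℝ) < a := by linarith
  have hp0 : (0:ℝ) < p := by linarith
  rw [piQ_sub_eq hp hpq d]
  have hsum2 : Summable (fun i : ℕ => ((q-p) * (M:ℝ)) * (((i:ℝ)+1) * (1/a)^(i+1))) :=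
    (summable_LSum ha).mul_left _
  have hterm : ∀ i : ℕ, (d i : ℝ)/p^(i+1) - (d i : ℝ)/q^(i+1)
      ≤ ((q-p) * (M:ℝ)) * (((i:ℝ)+1) * (1/a)^(i+1)) := by
    intro i
    rw [termwise_sub hp hpq]
    have h1 : 1/p^(i+1) - 1/q^(i+1) ≤ (q - p) * ((i:ℝ)+1) / p^(i+1) := inv_pow_sub_le hp hpq i
    have h2 : (0:ℝ) ≤ 1/p^(i+1) - 1/q^(i+1) := by
      have : q^(i+1) ≥ p^(i+1) := pow_le_pow_left₀ (le_of_lt hp0) hpq _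
      have hq0 : (0:ℝ) < q^(i+1) := by positivity
      have hp0' : (0:ℝ) < p^(i+1) := by positivity
      rw [sub_nonneg]
      apply one_div_le_one_div_of_le hp0' this
    calc (d i : ℝ) * (1/p^(i+1) - 1/q^(i+1)) ≤ (M:ℝ) * ((q - p) * ((i:ℝ)+1) / p^(i+1)) := by
          apply mul_le_mul (digit_le d i) h1 h2 (by positivity)
      _ ≤ (M:ℝ) * ((q - p) * ((i:ℝ)+1) * (1/a)^(i+1)) := by
          apply mul_le_mul_of_nonneg_left _ (by positivity)
          rw [div_eq_mul_one_div]
          apply mul_le_mul_of_nonneg_left _ (mul_nonneg (by linarith) (by positivity))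
          rw [one_div_pow]
          apply one_div_le_one_div_of_le (by positivity)
          exact pow_le_pow_left₀ (le_of_lt ha0) hap _
      _ = ((q-p) * (M:ℝ)) * (((i:ℝ)+1) * (1/a)^(i+1)) := by ring
  have hsum1 : Summable (fun i : ℕ => (d i : ℝ)/p^(i+1) - (d i : ℝ)/q^(i+1)) :=
    (summable_piQ hp d).sub (summable_piQ hq d)
  calc ∑' i : ℕ, ((d i : ℝ)/p^(i+1) - (d i : ℝ)/q^(i+1))
      ≤ ∑' i : ℕ, ((q-p) * (M:ℝ)) * (((i:ℝ)+1) * (1/a)^(i+1)) :=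
        Summable.tsum_le_tsum hterm hsum1 hsum2
    _ = ((q-p) * (M:ℝ)) * ∑' i : ℕ, (((i:ℝ)+1) * (1/a)^(i+1)) := tsum_mul_left
    _ = (q - p) * ((M:ℝ) * ∑' i : ℕ, ((i:ℝ)+1) * (1/a)^(i+1)) := by ring

lemma piQ_sub_ge (hp : 1 < p) (hpq : p ≤ q) (hqb : q ≤ b) {j : ℕ} (hj : d j ≠ 0) :
    (q - p) * (1/b)^(j+2) ≤ piQ M p d - piQ M q d := by
  have hq : 1 < q := lt_of_lt_of_le hp hpq
  have hp0 : (0:ℝ) < p := by linarith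
  have hq0 : (0:ℝ) < q := by linarith
  have hb0 : (0:ℝ) < b := by linarith
  rw [piQ_sub_eq hp hpq d]
  have hsum1 : Summable (fun i : ℕ => (d i : ℝ)/p^(i+1) - (d i : ℝ)/q^(i+1)) :=
    (summable_piQ hp d).sub (summable_piQ hq d)
  have hnn : ∀ i : ℕ, 0 ≤ (d i : ℝ)/p^(i+1) - (d i : ℝ)/q^(i+1) := by
    intro i
    rw [sub_nonneg]
    exact term_anti hp hpq d i
  have hterm : (q - p) * (1/b)^(j+2) ≤ (d j : ℝ)/p^(j+1) - (d j : ℝ)/q^(j+1) := by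
    have hd1 : (1:ℝ) ≤ (d j : ℝ) := by
      have : 1 ≤ ((d j : Fin (M+1)) : ℕ) := Nat.one_le_iff_ne_zero.mpr (fun h => hj (Fin.ext h))
      exact_mod_cast this
    rw [termwise_sub hp hpq]
    have hX0 : (0:ℝ) ≤ 1/p^(j+1) - 1/q^(j+1) :=
      le_trans (div_nonneg (by linarith) (by positivity)) (inv_pow_sub_ge hp hpq j)
    calc (q - p) * (1/b)^(j+2) ≤ (q - p) / q^(j+2) := by
          rw [div_eq_mul_one_div (q-p) (q^(j+2))]
          apply mul_le_mul_of_nonneg_left _ (by linarith)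
          rw [one_div_pow]
          apply one_div_le_one_div_of_le (by positivity)
          exact pow_le_pow_left₀ (le_of_lt hq0) hqb _
      _ ≤ 1/p^(j+1) - 1/q^(j+1) := inv_pow_sub_ge hp hpq j
      _ ≤ (d j : ℝ) * (1/p^(j+1) - 1/q^(j+1)) := by
          nlinarith [mul_nonneg (by linarith : (0:ℝ) ≤ (d j : ℝ) - 1) hX0]
    
  calc (q - p) * (1/b)^(j+2) ≤ (d j : ℝ)/p^(j+1) - (d j : ℝ)/q^(j+1) := hterm
    _ ≤ ∑' i : ℕ, ((d i : ℝ)/p^(i+1) - (d i : ℝ)/q^(i+1)) :=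
        Summable.le_tsum hsum1 j (fun i _ => hnn i)


/-- remainders of the greedy algorithm -/
noncomputable def gRem (M : ℕ) (q y : ℝ) : ℕ → ℝ
  | 0 => y
  | n+1 => q * gRem M q y n - min (M:ℝ) (⌊q * gRem M q y n⌋₊ : ℝ)

/-- digits of the greedy algorithm -/
noncomputable def gDig (M : ℕ) (q y : ℝ) (n : ℕ) : Fin (M+1) :=
  ⟨min M ⌊q * gRem M q y n⌋₊, by omega⟩

lemma gDig_cast (n : ℕ) : ((gDig M q y n : Fin (M+1)) : ℝ) = min (M:ℝ) (⌊q * gRem M q y n⌋₊ : ℝ) := by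
  have : ((gDig M q y n : Fin (M+1)) : ℕ) = min M ⌊q * gRem M q y n⌋₊ := rfl
  rw [show ((gDig M q y n : Fin (M+1)) : ℝ) = (((gDig M q y n : Fin (M+1)) : ℕ) : ℝ) from rfl, this]
  push_cast
  rfl

lemma gRem_bounds (hq : 1 < q) (hqM : q ≤ (M:ℝ) + 1) (hy0 : 0 ≤ y) (hyM : y ≤ (M:ℝ)/(q-1)) :
    ∀ n, 0 ≤ gRem M q y n ∧ gRem M q y n ≤ (M:ℝ)/(q-1) := by
  have hq0 : (0:ℝ) < q := by linarith
  have hq1 : (0:ℝ) < q - 1 := by linarith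
  have hM1 : (1:ℝ) ≤ (M:ℝ)/(q-1) := by
    rw [le_div_iff₀ hq1]
    linarith
  intro n
  induction n with
  | zero => exact ⟨hy0, hyM⟩
  | succ n ih =>
    obtain ⟨h0, h1⟩ := ih
    have hqr0 : 0 ≤ q * gRem M q y n := by positivity
    rcases le_total ((⌊q * gRem M q y n⌋₊ : ℝ)) (M:ℝ) with hc | hc
    · have hmin : min (M:ℝ) (⌊q * gRem M q y n⌋₊ : ℝ) = (⌊q * gRem M q y n⌋₊ : ℝ) :=
        min_eq_right hc
      constructor
      · show 0 ≤ q * gRem M q y n - _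
        rw [hmin, sub_nonneg]
        exact Nat.floor_le hqr0
      · show q * gRem M q y n - _ ≤ _
        rw [hmin]
        have := Nat.lt_floor_add_one (q * gRem M q y n)
        linarith
    · have hmin : min (M:ℝ) (⌊q * gRem M q y n⌋₊ : ℝ) = (M:ℝ) := min_eq_left hc
      constructor
      · show 0 ≤ q * gRem M q y n - _
        rw [hmin, sub_nonneg]
        calc (M:ℝ) ≤ (⌊q * gRem M q y n⌋₊ : ℝ) := hc
          _ ≤ q * gRem M q y n := Nat.floor_le hqr0
      · show q * gRem M q y n - _ ≤ _
        rw [hmin]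
        have h2 : q * gRem M q y n ≤ q * ((M:ℝ)/(q-1)) :=
          mul_le_mul_of_nonneg_left h1 (le_of_lt hq0)
        have h3 : q * ((M:ℝ)/(q-1)) - (M:ℝ) = (M:ℝ)/(q-1) := by
          field_simp
          ring
        linarith

lemma gRem_partial (hq : 1 < q) :
    ∀ n, y = (∑ i ∈ Finset.range n, ((gDig M q y i : Fin (M+1)) : ℝ)/q^(i+1))
      + gRem M q y n / q^n := by
  have hq0 : (0:ℝ) < q := by linarith
  intro n
  induction n with
  | zero => simp [gRem]
  | succ n ih =>
    have hstep : gRem M q y (n+1) = q * gRem M q y n - ((gDig M q y n : Fin (M+1)) : ℝ) := by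
      rw [gDig_cast]
      rfl
    conv_lhs => rw [ih]
    rw [Finset.sum_range_succ, hstep]
    have hqn : q^n ≠ 0 := by positivity
    have hqn1 : q^(n+1) ≠ 0 := by positivity
    field_simp
    ring

theorem exists_expansion (hq : 1 < q) (hqM : q ≤ (M:ℝ) + 1) (hy0 : 0 ≤ y)
    (hyM : y ≤ (M:ℝ)/(q-1)) : ∃ d : Digits M, piQ M q d = y := by
  refine ⟨gDig M q y, ?_⟩
  have hq0 : (0:ℝ) < q := by linarith
  have hsum := summable_piQ hq (gDig M q y)
  have htend := hsum.hasSum.tendsto_sum_nat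
  have hrem : Filter.Tendsto (fun n => gRem M q y n / q^n) Filter.atTop (nhds 0) := by
    have hb := gRem_bounds hq hqM hy0 hyM
    apply squeeze_zero (fun n => div_nonneg (hb n).1 (by positivity)) 
      (g := fun n => ((M:ℝ)/(q-1)) * (1/q)^n)
    · intro n
      have h1 : gRem M q y n / q^n ≤ ((M:ℝ)/(q-1)) / q^n := by
        apply div_le_div_of_nonneg_right (hb n).2 (by positivity)
      refine h1.trans (le_of_eq ?_)
      rw [one_div_pow, div_eq_mul_one_div]
    · have : (1/q) < 1 := by rw [div_lt_one hq0]; exact hq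
      have h2 := tendsto_pow_atTop_nhds_zero_of_lt_one (by positivity) this
      simpa using h2.const_mul ((M:ℝ)/(q-1))
  have hpart : (fun n => ∑ i ∈ Finset.range n, ((gDig M q y i : Fin (M+1)) : ℝ)/q^(i+1))
      = fun n => y - gRem M q y n / q^n := by
    funext n
    have := gRem_partial (M := M) (y := y) hq n
    linarith
  rw [hpart] at htend
  have : Filter.Tendsto (fun n => y - gRem M q y n / q^n) Filter.atTop (nhds (y - 0)) :=
    (tendsto_const_nhds).sub hrem
  have hy : piQ M q (gDig M q y) = y - 0 := tendsto_nhds_unique htend this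
  simpa using hy


def splice (k : ℕ) (d : Digits M) (a : Fin (M+1)) (e : Digits M) : Digits M :=
  fun i => if i < k then d i else if i = k then a else e (i - (k+1))

lemma shiftSeq_splice (k : ℕ) (d : Digits M) (a : Fin (M+1)) (e : Digits M) :
    shiftSeq (k+1) (splice k d a e) = e := by
  funext i
  show splice k d a e (k+1+i) = e i
  unfold splice
  have h1 : ¬ (k+1+i < k) := by omega
  have h2 : ¬ (k+1+i = k) := by omega
  rw [if_neg h1, if_neg h2]
  congr 1
  omega

lemma splice_apply_self (k : ℕ) (d : Digits M) (a : Fin (M+1)) (e : Digits M) :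
    splice k d a e k = a := by
  unfold splice
  simp

lemma piQ_splice (hq : 1 < q) (k : ℕ) (d : Digits M) (a : Fin (M+1)) (e : Digits M) :
    piQ M q (splice k d a e) = (∑ i ∈ Finset.range k, (d i : ℝ)/q^(i+1))
      + (a : ℝ)/q^(k+1) + piQ M q e / q^(k+1) := by
  rw [piQ_shift hq (splice k d a e) (k+1), shiftSeq_splice, Finset.sum_range_succ]
  congr 2
  · apply Finset.sum_congr rfl
    intro i hi
    have hik : i < k := Finset.mem_range.mp hi
    simp [splice, hik]
  · rw [splice_apply_self]

theorem unique_greedy (hq : 1 < q) (hqM : q ≤ (M:ℝ)+1)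
    (hu : ∀ e : Digits M, piQ M q e = piQ M q d → e = d)
    (k : ℕ) (hk : (d k : ℕ) < M) : piQ M q (shiftSeq (k+1) d) ≤ 1 := by
  by_contra hcon
  push_neg at hcon
  set T := piQ M q (shiftSeq (k+1) d) with hT
  have hTle : T ≤ (M:ℝ)/(q-1) := piQ_le hq _
  obtain ⟨e, he⟩ := exists_expansion (y := T - 1) hq hqM (by linarith) (by linarith)
  set a : Fin (M+1) := ⟨(d k : ℕ) + 1, by omega⟩ with ha
  have hacast : ((a : Fin (M+1)) : ℝ) = (d k : ℝ) + 1 := by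
    show (((d k : ℕ) + 1 : ℕ) : ℝ) = _
    push_cast
    ring
  have hsp := piQ_splice hq k d a e
  have hd2 := piQ_shift hq d (k+1)
  rw [Finset.sum_range_succ] at hd2
  have hpi : piQ M q (splice k d a e) = piQ M q d := by
    rw [hsp, hd2, he, hacast, ← hT]
    ring
  have heq := hu _ hpi
  have hval : (splice k d a e k : ℕ) = (d k : ℕ) := congrArg Fin.val (congrFun heq k)
  rw [splice_apply_self] at hval
  have : (d k : ℕ) + 1 = (d k : ℕ) := hval
  omega

theorem unique_lazy (hq : 1 < q) (hqM : q ≤ (M:ℝ)+1)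
    (hu : ∀ e : Digits M, piQ M q e = piQ M q d → e = d)
    (k : ℕ) (hk : (d k : ℕ) ≠ 0) : (M:ℝ)/(q-1) - 1 ≤ piQ M q (shiftSeq (k+1) d) := by
  by_contra hcon
  push_neg at hcon
  set T := piQ M q (shiftSeq (k+1) d) with hT
  have hT0 : 0 ≤ T := piQ_nonneg (by linarith) _
  obtain ⟨e, he⟩ := exists_expansion (y := T + 1) hq hqM (by linarith) (by linarith)
  set a : Fin (M+1) := ⟨(d k : ℕ) - 1, by omega⟩ with ha
  have hacast : ((a : Fin (M+1)) : ℝ) = (d k : ℝ) - 1 := by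
    show (((d k : ℕ) - 1 : ℕ) : ℝ) = _
    have h1 : 1 ≤ (d k : ℕ) := Nat.one_le_iff_ne_zero.mpr hk
    push_cast [Nat.cast_sub h1]
    ring
  have hsp := piQ_splice hq k d a e
  have hd2 := piQ_shift hq d (k+1)
  rw [Finset.sum_range_succ] at hd2
  have hpi : piQ M q (splice k d a e) = piQ M q d := by
    rw [hsp, hd2, he, hacast, ← hT]
    ring
  have heq := hu _ hpi
  have hval : (splice k d a e k : ℕ) = (d k : ℕ) := congrArg Fin.val (congrFun heq k)
  rw [splice_apply_self] at hval
  have : (d k : ℕ) - 1 = (d k : ℕ) := hval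
  omega

lemma exists_nonzero_digit (hx : 0 < x) (hd : piQ M q d = x) : ∃ j, d j ≠ 0 := by
  by_contra h
  push_neg at h
  rw [piQ_zero_of h] at hd
  linarith

lemma unique_not_endsInZero (hq : 1 < q) (hqM : q < (M:ℝ)+1) (hx : 0 < x)
    (hd : piQ M q d = x) (hu : ∀ e : Digits M, piQ M q e = x → e = d) : ¬ EndsInZero d := by
  rintro ⟨N, hN⟩
  obtain ⟨j, hj⟩ := exists_nonzero_digit hx hd
  have hjN : j ≤ N := by
    by_contra hc
    push_neg at hc
    exact hj (hN j (le_of_lt hc))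
  set k := Nat.findGreatest (fun i => d i ≠ 0) N with hkdef
  have hPk : d k ≠ 0 := by
    have h := Nat.findGreatest_spec (P := fun i => d i ≠ 0) (m := j) hjN hj
    exact h
  have hzero : ∀ m, k < m → d m = 0 := by
    intro m hm
    rcases le_or_gt m N with h1 | h1
    · by_contra hc
      exact Nat.findGreatest_is_greatest hm h1 hc
    · exact hN m (le_of_lt h1)
  have hshift : ∀ i, shiftSeq (k+1) d i = 0 := fun i => hzero _ (by omega)
  have hTz : piQ M q (shiftSeq (k+1) d) = 0 := piQ_zero_of hshift
  have hu' : ∀ e : Digits M, piQ M q e = piQ M q d → e = d := fun e hpe => hu e (hd ▸ hpe)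
  have hlazy := unique_lazy hq (le_of_lt hqM) hu' k (fun hc => hPk (Fin.ext hc))
  rw [hTz] at hlazy
  have hq1 : (0:ℝ) < q - 1 := by linarith
  have : (1:ℝ) < (M:ℝ)/(q-1) := by
    rw [lt_div_iff₀ hq1]
    linarith
  linarith

lemma phi_spec (hq1 : 1 < q) (hqM : q < (M:ℝ)+1) (hx : 0 < x) (hU : x ∈ Uq M q) :
    piQ M q (Phi M x q) = x ∧ (∀ e : Digits M, piQ M q e = x → e = Phi M x q) := by
  obtain ⟨d, hd, hun⟩ := hU
  have hnez := unique_not_endsInZero hq1 hqM hx hd hun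
  have hqg : IsQuasiGreedy M q x d := ⟨hd, hnez, fun e he _ => Or.inl (hun e he)⟩
  have hex : ∃ d', IsQuasiGreedy M q x d' := ⟨d, hqg⟩
  rw [Phi, dif_pos hex]
  have hch := hex.choose_spec
  have hcd : hex.choose = d := hun _ hch.1
  rw [hcd]
  exact ⟨hd, hun⟩


lemma piQ_diff_shift {c d : Digits M} (hq : 1 < q) (n : ℕ) (hagree : ∀ i < n, c i = d i) :
    piQ M q d - piQ M q c =
      ((d n : ℝ) - (c n : ℝ) + (piQ M q (shiftSeq (n+1) d) - piQ M q (shiftSeq (n+1) c)))/q^(n+1) := by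
  have hsd := piQ_shift hq d (n+1)
  have hsc := piQ_shift hq c (n+1)
  rw [Finset.sum_range_succ] at hsd hsc
  have hpre : (∑ i ∈ Finset.range n, (c i : ℝ)/q^(i+1)) = ∑ i ∈ Finset.range n, (d i : ℝ)/q^(i+1) :=
    Finset.sum_congr rfl (fun i hi => by rw [hagree i (Finset.mem_range.mp hi)])
  rw [hsd, hsc, hpre]
  have h0 : q^(n+1) ≠ 0 := by positivity
  field_simp
  ring

lemma piQ_diff_shift' {c d : Digits M} (hq : 1 < q) (n : ℕ) (hagree : ∀ i < n, c i = d i) :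
    piQ M q d - piQ M q c = (piQ M q (shiftSeq n d) - piQ M q (shiftSeq n c))/q^n := by
  have hsd := piQ_shift hq d n
  have hsc := piQ_shift hq c n
  have hpre : (∑ i ∈ Finset.range n, (c i : ℝ)/q^(i+1)) = ∑ i ∈ Finset.range n, (d i : ℝ)/q^(i+1) :=
    Finset.sum_congr rfl (fun i hi => by rw [hagree i (Finset.mem_range.mp hi)])
  rw [hsd, hsc, hpre]
  have h0 : q^n ≠ 0 := by positivity
  field_simp
  ring

set_option maxHeartbeats 2000000 in
theorem key_estimate (M : ℕ) (hM : 0 < M) (x : ℝ) (hx : 0 < x) (a b : ℝ)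
    (ha : 1 < a) (hab : a < b) (hb : b < (M:ℝ) + 1) :
    ∃ K1 K2 : ℝ, 0 < K1 ∧ 0 < K2 ∧
      ∀ p q : ℝ, p ∈ Ubases M x ∩ Set.Ioo a b → q ∈ Ubases M x ∩ Set.Ioo a b → p < q →
        ∀ n : ℕ, (∀ i < n, Phi M x p i = Phi M x q i) → Phi M x p n ≠ Phi M x q n →
          K1 * (1/b)^(n+1) ≤ q - p ∧ q - p ≤ K2 * (1/a)^(n+1) := by
  have hM1 : (1:ℝ) ≤ (M:ℝ) := by exact_mod_cast hM
  have hb1 : 1 < b := lt_trans ha hab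
  have ha0 : (0:ℝ) < a := by linarith
  have hb0 : (0:ℝ) < b := by linarith
  obtain ⟨L, hLdef⟩ : ∃ L : ℝ, L = (M:ℝ) * ∑' i : ℕ, ((i:ℝ)+1) * (1/a)^(i+1) := ⟨_, rfl⟩
  have hL : 0 < L := by
    rw [hLdef]
    exact mul_pos (by linarith) (LSum_pos ha)
  obtain ⟨γ0, hγdef⟩ : ∃ g : ℝ, g = (M:ℝ)/(b-1) - 1 := ⟨_, rfl⟩
  have hγ0 : 0 < γ0 := by
    have h1 : (1:ℝ) < (M:ℝ)/(b-1) := by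
      rw [lt_div_iff₀ (by linarith)]
      linarith
    rw [hγdef]
    linarith
  obtain ⟨J, hJ⟩ := pow_unbounded_of_one_lt ((M:ℝ)/(x*(a-1))) ha
  obtain ⟨β, hβdef⟩ : ∃ B : ℝ, B = (1/b:ℝ)^(J+2) := ⟨_, rfl⟩
  have hβ : 0 < β := by rw [hβdef]; positivity
  have ha1' : (0:ℝ) < a - 1 := by linarith
  refine ⟨γ0/L, (M:ℝ)/(a-1)*a/β, div_pos hγ0 hL, by positivity, ?_⟩
  rintro p q ⟨hpU, hpa, hpb⟩ ⟨hqU, hqa, hqb⟩ hpq n hagree hneq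
  have hp1 : 1 < p := lt_trans ha hpa
  have hq1 : 1 < q := lt_trans ha hqa
  have hpM : p < (M:ℝ)+1 := lt_trans hpb hb
  have hqM : q < (M:ℝ)+1 := lt_trans hqb hb
  obtain ⟨hc, hcu⟩ := phi_spec hp1 hpM hx hpU.2
  obtain ⟨hd, hdu⟩ := phi_spec hq1 hqM hx hqU.2
  set c : Digits M := Phi M x p with hcdef
  set d : Digits M := Phi M x q with hddef
  have hcu' : ∀ e : Digits M, piQ M p e = piQ M p c → e = c := fun e h => hcu e (by rw [h, hc])
  have hdu' : ∀ e : Digits M, piQ M q e = piQ M q d → e = d := fun e h => hdu e (by rw [h, hd])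
  obtain ⟨jc, hjc⟩ := exists_nonzero_digit hx hc
  obtain ⟨jd, hjd⟩ := exists_nonzero_digit hx hd
  -- x - piQ q c > 0
  have hqclt : 0 < piQ M p c - piQ M q c := by
    have := piQ_sub_ge hp1 (le_of_lt hpq) (le_of_lt hqb) hjc
    have h2 : 0 < (q - p) * (1/b)^(jc+2) := by
      apply mul_pos (by linarith) (by positivity)
    linarith
  -- Step 1 : (c n : ℕ) < (d n : ℕ)
  have hstep1 : (c n : ℕ) < (d n : ℕ) := by
    rcases lt_trichotomy ((c n : ℕ)) ((d n : ℕ)) with h | h | h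
    · exact h
    · exact absurd (Fin.ext h) hneq
    · exfalso
      have hdnM : (d n : ℕ) < M := by
        have := (c n).isLt
        omega
      have hgreedy := unique_greedy hq1 (le_of_lt hqM) hdu' n hdnM
      have hdiff := piQ_diff_shift (c := c) (d := d) hq1 n hagree
      rw [hd] at hdiff
      -- numerator nonpositive
      have hTc : 0 ≤ piQ M q (shiftSeq (n+1) c) := piQ_nonneg (by linarith) _
      have hcast : (d n : ℝ) + 1 ≤ (c n : ℝ) := by exact_mod_cast h
      have hnum : (d n : ℝ) - (c n : ℝ) +
          (piQ M q (shiftSeq (n+1) d) - piQ M q (shiftSeq (n+1) c)) ≤ 0 := by linarith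
      have hfrac : (( (d n : ℝ) - (c n : ℝ) +
          (piQ M q (shiftSeq (n+1) d) - piQ M q (shiftSeq (n+1) c)))/q^(n+1)) ≤ 0 :=
        div_nonpos_iff.mpr (Or.inr ⟨hnum, by positivity⟩)
      -- but x - piQ q c > 0
      have hxc : 0 < x - piQ M q c := by
        have h5 := hqclt
        rw [hc] at h5
        exact h5
      rw [hdiff] at hxc
      linarith
  -- Step 2 : lower bound
  have hcnM : (c n : ℕ) < M := by
    have := (d n).isLt
    omega
  have hdn0 : (d n : ℕ) ≠ 0 := by omega
  have hTc' : piQ M p (shiftSeq (n+1) c) ≤ 1 := unique_greedy hp1 (le_of_lt hpM) hcu' n hcnM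
  have hTd_lazy : (M:ℝ)/(q-1) - 1 ≤ piQ M q (shiftSeq (n+1) d) :=
    unique_lazy hq1 (le_of_lt hqM) hdu' n hdn0
  have hTd_mono : piQ M q (shiftSeq (n+1) d) ≤ piQ M p (shiftSeq (n+1) d) :=
    piQ_anti hp1 (le_of_lt hpq) _
  have hgap : γ0 ≤ (M:ℝ)/(q-1) - 1 := by
    have h1 : (M:ℝ)/(b-1) ≤ (M:ℝ)/(q-1) := by
      rw [div_le_div_iff₀ (by linarith) (by linarith)]
      nlinarith [mul_nonneg (by linarith : (0:ℝ) ≤ (M:ℝ)) (by linarith : (0:ℝ) ≤ b - q)]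
    rw [hγdef]
    linarith
  have hdiffp := piQ_diff_shift (c := c) (d := d) hp1 n hagree
  have hcast2 : (c n : ℝ) + 1 ≤ (d n : ℝ) := by exact_mod_cast hstep1
  have hnum2 : γ0 ≤ (d n : ℝ) - (c n : ℝ) +
      (piQ M p (shiftSeq (n+1) d) - piQ M p (shiftSeq (n+1) c)) := by linarith
  have hlow : γ0 * (1/b)^(n+1) ≤ piQ M p d - piQ M p c := by
    rw [hdiffp]
    have h1 : γ0 * (1/b)^(n+1) ≤ γ0 / p^(n+1) := by
      rw [div_eq_mul_one_div γ0 (p^(n+1))]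
      apply mul_le_mul_of_nonneg_left _ (le_of_lt hγ0)
      rw [one_div_pow]
      apply one_div_le_one_div_of_le (by positivity)
      apply pow_le_pow_left₀ (by linarith) (by linarith)
    refine h1.trans ?_
    exact div_le_div_of_nonneg_right hnum2 (by positivity)
  have hupperL : piQ M p d - piQ M p c ≤ (q - p) * L := by
    have h1 := piQ_sub_le (M := M) ha (le_of_lt hpa) (le_of_lt hpq) d
    rw [← hLdef] at h1
    have h3 : piQ M p c = piQ M q d := by rw [hc, hd]
    linarith
  have hlower : γ0/L * (1/b)^(n+1) ≤ q - p := by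
    rw [div_mul_eq_mul_div, div_le_iff₀ hL]
    calc γ0 * (1/b)^(n+1) ≤ piQ M p d - piQ M p c := hlow
      _ ≤ (q-p) * L := hupperL
  -- Step 3 : upper bound
  have hexd : ∃ i, d i ≠ 0 := ⟨jd, hjd⟩
  obtain ⟨j, hdj, hjmin⟩ : ∃ j, d j ≠ 0 ∧ ∀ i < j, d i = 0 :=
    ⟨Nat.find hexd, Nat.find_spec hexd, fun i hi => not_not.mp (Nat.find_min hexd hi)⟩
  have hxle : x ≤ (M:ℝ)/(a-1) * (1/a)^j := by
    have hsh := piQ_shift hq1 d j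
    have hzero : (∑ i ∈ Finset.range j, (d i : ℝ)/q^(i+1)) = 0 := by
      apply Finset.sum_eq_zero
      intro i hi
      rw [hjmin i (Finset.mem_range.mp hi)]
      simp
    rw [hzero, zero_add] at hsh
    have hT : piQ M q (shiftSeq j d) ≤ (M:ℝ)/(q-1) := piQ_le hq1 _
    have hTa : (M:ℝ)/(q-1) ≤ (M:ℝ)/(a-1) := by
      rw [div_le_div_iff₀ (by linarith) (by linarith)]
      nlinarith [mul_nonneg (by linarith : (0:ℝ) ≤ (M:ℝ)) (by linarith : (0:ℝ) ≤ q - a)]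
    calc x = piQ M q (shiftSeq j d)/q^j := by rw [← hd, hsh]
      _ ≤ ((M:ℝ)/(a-1))/q^j := by
          apply div_le_div_of_nonneg_right (hT.trans hTa) (by positivity)
      _ ≤ (M:ℝ)/(a-1) * (1/a)^j := by
          rw [div_eq_mul_one_div ((M:ℝ)/(a-1)) (q^j), one_div_pow]
          apply mul_le_mul_of_nonneg_left _ (by positivity)
          apply one_div_le_one_div_of_le (by positivity)
          apply pow_le_pow_left₀ (by linarith) (by linarith)
  have hjJ : j < J := by
    have h1 : a^j * x ≤ (M:ℝ)/(a-1) := by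
      have := mul_le_mul_of_nonneg_left hxle (le_of_lt (pow_pos ha0 j))
      calc a^j * x ≤ a^j * ((M:ℝ)/(a-1) * (1/a)^j) := this
        _ = (M:ℝ)/(a-1) * (a^j * (1/a)^j) := by ring
        _ = (M:ℝ)/(a-1) := by
            rw [one_div_pow, one_div, mul_inv_cancel₀ (by positivity : (a:ℝ)^j ≠ 0)]
            ring
    have h2 : a^j ≤ (M:ℝ)/(x*(a-1)) := by
      rw [le_div_iff₀ (by positivity)]
      calc a^j * (x*(a-1)) = (a^j * x) * (a-1) := by ring
        _ ≤ ((M:ℝ)/(a-1)) * (a-1) := by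
            apply mul_le_mul_of_nonneg_right h1 (by linarith)
        _ = (M:ℝ) := by field_simp
    have h3 : a^j < a^J := lt_of_le_of_lt h2 hJ
    exact (pow_lt_pow_iff_right₀ ha).mp h3
  have hbeta : β ≤ (1/b)^(j+2) := by
    rw [hβdef]
    apply pow_le_pow_of_le_one (by positivity) (by rw [div_le_one hb0]; linarith) (by omega)
  have hlow3 : (q-p) * β ≤ piQ M p d - piQ M p c := by
    have h1 := piQ_sub_ge hp1 (le_of_lt hpq) (le_of_lt hqb) hdj
    have h2 : (q-p) * β ≤ (q-p) * (1/b)^(j+2) :=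
      mul_le_mul_of_nonneg_left hbeta (by linarith)
    have h3 : piQ M p c = piQ M q d := by rw [hc, hd]
    linarith
  have hupper3 : piQ M p d - piQ M p c ≤ (M:ℝ)/(a-1) * a * (1/a)^(n+1) := by
    have hdiff := piQ_diff_shift' (c := c) (d := d) hp1 n hagree
    rw [hdiff]
    have hDn : piQ M p (shiftSeq n d) ≤ (M:ℝ)/(p-1) := piQ_le hp1 _
    have hCn : 0 ≤ piQ M p (shiftSeq n c) := piQ_nonneg (by linarith) _
    calc (piQ M p (shiftSeq n d) - piQ M p (shiftSeq n c))/p^n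
        ≤ ((M:ℝ)/(p-1))/p^n := by
          apply div_le_div_of_nonneg_right (by linarith) (by positivity)
      _ ≤ ((M:ℝ)/(a-1))/a^n := by
          apply div_le_div₀ (by positivity) ?_ (by positivity) ?_
          · rw [div_le_div_iff₀ (by linarith) (by linarith)]
            nlinarith [mul_nonneg (by linarith : (0:ℝ) ≤ (M:ℝ)) (by linarith : (0:ℝ) ≤ p - a)]
          · exact pow_le_pow_left₀ (by linarith) (by linarith) n
      _ = (M:ℝ)/(a-1) * a * (1/a)^(n+1) := by
          have h4 : a - 1 ≠ 0 := by linarith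
          have h5 : a ≠ 0 := by linarith
          rw [one_div_pow, pow_succ]
          field_simp
  refine ⟨hlower, ?_⟩
  have h1 : (q-p) * β ≤ (M:ℝ)/(a-1) * a * (1/a)^(n+1) := le_trans hlow3 hupper3
  rw [div_mul_eq_mul_div, le_div_iff₀ hβ]
  exact h1


end SecA

section Diam
variable {X : Type*} {dist : X → X → ℝ} {A : Set X}

lemma gdiam_le {e : ℝ≥0∞} (h : ∀ x ∈ A, ∀ y ∈ A, ENNReal.ofReal (dist x y) ≤ e) :
    gdiam dist A ≤ e := by
  apply iSup₂_le
  intro x hx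
  apply iSup₂_le
  intro y hy
  exact h x hx y hy

lemma le_gdiam {x y : X} (hx : x ∈ A) (hy : y ∈ A) :
    ENNReal.ofReal (dist x y) ≤ gdiam dist A :=
  le_iSup₂_of_le x hx (le_iSup₂_of_le y hy le_rfl)

lemma gdiam_empty : gdiam dist (∅ : Set X) = 0 := by
  simp [gdiam]

end Diam

section TR1
variable {M : ℕ}

theorem gH_le_muH {S : Set ℝ} {Φ : ℝ → Digits M} {θ t : ℝ} (ht : 0 < t) (hθ : 0 < θ)
    {η : ℝ≥0∞} (hη0 : η ≠ 0) (hηt : η ≠ ⊤)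
    (h : ∀ p ∈ S, ∀ q ∈ S, ENNReal.ofReal (rho M (Φ p) (Φ q)) ≤ (η * edist p q) ^ θ) :
    gHMeasure (rho M) t (Φ '' S) ≤ η ^ (θ * t) * μH[θ * t] S := by
  classical
  set s : ℝ := θ * t with hs
  have hs0 : 0 < s := mul_pos hθ ht
  have hηs0 : η ^ s ≠ 0 := (ENNReal.rpow_pos (hη0.bot_lt) hηt).ne'
  have hηst : η ^ s ≠ ⊤ := ENNReal.rpow_ne_top_of_nonneg hs0.le hηt
  rw [gHMeasure]
  apply iSup₂_le
  intro δ' hδ'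
  by_cases hμtop : μH[s] S = ⊤
  · rw [hμtop, ENNReal.mul_top hηs0]
    exact le_top
  -- choose euclidean scale r
  set X : ℝ≥0∞ := ENNReal.ofReal δ' with hXdef
  have hX0 : X ≠ 0 := (ENNReal.ofReal_pos.mpr hδ').ne'
  have hXt : X ≠ ⊤ := ENNReal.ofReal_ne_top
  set r : ℝ≥0∞ := (X ^ (1/θ)) / η with hrdef
  have hr0 : 0 < r := ENNReal.div_pos (ENNReal.rpow_pos (hX0.bot_lt) hXt).ne' hηt
  have hrX : (η * r) ^ θ ≤ X := by
    rw [hrdef, ENNReal.mul_div_cancel' (fun h => absurd h hη0) (fun h => absurd h hηt), ← ENNReal.rpow_mul,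
      one_div_mul_cancel (ne_of_gt hθ), ENNReal.rpow_one]
  -- the infimum over euclidean covers at scale r is at most μH
  have hIle : (⨅ (tc : ℕ → Set ℝ) (_ : S ⊆ ⋃ n, tc n) (_ : ∀ n, EMetric.diam (tc n) ≤ r),
      ∑' n, ⨆ _ : (tc n).Nonempty, EMetric.diam (tc n) ^ s) ≤ μH[s] S := by
    rw [Measure.hausdorffMeasure_apply]
    exact le_iSup₂ (f := fun (r' : ℝ≥0∞) (_ : 0 < r') =>
      ⨅ (tc : ℕ → Set ℝ) (_ : S ⊆ ⋃ n, tc n) (_ : ∀ n, EMetric.diam (tc n) ≤ r'),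
      ∑' n, ⨆ _ : (tc n).Nonempty, EMetric.diam (tc n) ^ s) r hr0
  apply ENNReal.le_of_forall_pos_le_add
  intro ε hε _
  have hε'0 : (ε : ℝ≥0∞) / η ^ s ≠ 0 := by
    simp only [ne_eq, ENNReal.div_eq_zero_iff, not_or]
    exact ⟨by exact_mod_cast hε.ne', hηst⟩
  have hIlt : (⨅ (tc : ℕ → Set ℝ) (_ : S ⊆ ⋃ n, tc n) (_ : ∀ n, EMetric.diam (tc n) ≤ r),
      ∑' n, ⨆ _ : (tc n).Nonempty, EMetric.diam (tc n) ^ s) < μH[s] S + (ε : ℝ≥0∞) / η ^ s :=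
    lt_of_le_of_lt hIle (ENNReal.lt_add_right hμtop hε'0)
  obtain ⟨tc, h1⟩ := iInf_lt_iff.mp hIlt
  obtain ⟨hcov, h2⟩ := iInf_lt_iff.mp h1
  obtain ⟨hmesh, h3⟩ := iInf_lt_iff.mp h2
  -- image cover
  set B : ℕ → Set (Digits M) := fun n => Φ '' (tc n ∩ S) with hBdef
  have hcovB : Φ '' S ⊆ ⋃ n, B n := by
    rintro y ⟨p, hp, rfl⟩
    obtain ⟨U, ⟨n, rfl⟩, hpU⟩ := hcov hp
    exact Set.mem_iUnion.mpr ⟨n, ⟨p, ⟨hpU, hp⟩, rfl⟩⟩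
  have hdiamB : ∀ n, gdiam (rho M) (B n) ≤ (η * EMetric.diam (tc n)) ^ θ := by
    intro n
    apply gdiam_le
    rintro _ ⟨p, ⟨hp1, hp2⟩, rfl⟩ _ ⟨q, ⟨hq1, hq2⟩, rfl⟩
    refine le_trans (h p hp2 q hq2) ?_
    apply ENNReal.rpow_le_rpow _ hθ.le
    exact mul_le_mul_right (EMetric.edist_le_diam_of_mem hp1 hq1) η
  have hmeshB : ∀ n, gdiam (rho M) (B n) ≤ ENNReal.ofReal δ' := by
    intro n
    refine le_trans (hdiamB n) (le_trans ?_ hrX)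
    apply ENNReal.rpow_le_rpow _ hθ.le
    exact mul_le_mul_right (hmesh n) η
  have hsumB : ∑' n, gdiam (rho M) (B n) ^ t
      ≤ η ^ s * ∑' n, ⨆ _ : (tc n).Nonempty, EMetric.diam (tc n) ^ s := by
    rw [← ENNReal.tsum_mul_left]
    apply ENNReal.tsum_le_tsum
    intro n
    by_cases hne : (tc n ∩ S).Nonempty
    · have hne' : (tc n).Nonempty := ⟨hne.choose, hne.choose_spec.1⟩
      rw [iSup_pos hne']
      calc gdiam (rho M) (B n) ^ t ≤ ((η * EMetric.diam (tc n)) ^ θ) ^ t :=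
            ENNReal.rpow_le_rpow (hdiamB n) ht.le
        _ = (η * EMetric.diam (tc n)) ^ s := by
            rw [← ENNReal.rpow_mul]
        _ = η ^ s * EMetric.diam (tc n) ^ s := ENNReal.mul_rpow_of_nonneg _ _ hs0.le
    · have hBe : B n = ∅ := by
        simp only [Set.not_nonempty_iff_eq_empty] at hne
        have h9 : Φ '' (tc n ∩ S) = ∅ := by
          rw [hne]
          exact Set.image_empty Φ
        exact h9
      rw [hBe, gdiam_empty, ENNReal.zero_rpow_of_pos ht]
      exact zero_le
  calc (⨅ (C : ℕ → Set (Digits M)) (_ : Φ '' S ⊆ ⋃ n, C n)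
        (_ : ∀ n, gdiam (rho M) (C n) ≤ ENNReal.ofReal δ'), ∑' n, gdiam (rho M) (C n) ^ t)
      ≤ ∑' n, gdiam (rho M) (B n) ^ t := by
        refine le_trans (iInf_le _ B) ?_
        refine le_trans (iInf_le _ hcovB) ?_
        exact iInf_le _ hmeshB
    _ ≤ η ^ s * ∑' n, ⨆ _ : (tc n).Nonempty, EMetric.diam (tc n) ^ s := hsumB
    _ ≤ η ^ s * (μH[s] S + (ε : ℝ≥0∞) / η ^ s) := mul_le_mul_right h3.le _
    _ = η ^ s * μH[s] S + (ε : ℝ≥0∞) := by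
        rw [mul_add, ENNReal.mul_div_cancel' (fun h => absurd h hηs0) (fun h => absurd h hηst)]

end TR1

section TR2
variable {M : ℕ}

theorem muH_le_gH {S : Set ℝ} {Φ : ℝ → Digits M} {lam s : ℝ} (hs : 0 < s) (hlam : 0 < lam)
    {κ : ℝ≥0∞} (hκ0 : κ ≠ 0) (hκt : κ ≠ ⊤)
    (h : ∀ p ∈ S, ∀ q ∈ S, edist p q ≤ κ * (ENNReal.ofReal (rho M (Φ p) (Φ q))) ^ lam) :
    μH[s] S ≤ κ ^ s * gHMeasure (rho M) (lam * s) (Φ '' S) := by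
  classical
  set t : ℝ := lam * s with ht
  have hκs0 : κ ^ s ≠ 0 := (ENNReal.rpow_pos (hκ0.bot_lt) hκt).ne'
  have hκst : κ ^ s ≠ ⊤ := ENNReal.rpow_ne_top_of_nonneg hs.le hκt
  by_cases hgtop : gHMeasure (rho M) t (Φ '' S) = ⊤
  · rw [hgtop, ENNReal.mul_top hκs0]
    exact le_top
  rw [Measure.hausdorffMeasure_apply]
  apply iSup₂_le
  intro r hr0
  -- choose a ρ-scale δ'
  set ω : ℝ≥0∞ := ((min r 1) / κ) ^ (1/lam) with hωdef
  have hmin0 : min r 1 ≠ 0 := by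
    simp only [ne_eq, min_eq_top, lt_min_iff] at *
    intro hc
    rcases min_eq_iff.mp hc with ⟨h1, _⟩ | ⟨h1, _⟩
    · exact hr0.ne' h1
    · exact one_ne_zero h1
  have hmint : min r 1 ≠ ⊤ := by
    intro hc
    have := min_le_right r 1
    rw [hc] at this
    exact (lt_irrefl (1:ℝ≥0∞)) (lt_of_lt_of_le ENNReal.one_lt_top this)
  have hbase0 : (min r 1) / κ ≠ 0 := (ENNReal.div_pos hmin0 hκt).ne'
  have hbaset : (min r 1) / κ ≠ ⊤ := by
    intro hc
    rw [ENNReal.div_eq_top] at hc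
    rcases hc with ⟨_, h2⟩ | ⟨h1, _⟩
    · exact hκ0 h2
    · exact hmint h1
  have hω0 : ω ≠ 0 := (ENNReal.rpow_pos (hbase0.bot_lt) hbaset).ne'
  have hωκ : κ * ω ^ lam ≤ r := by
    rw [hωdef, ← ENNReal.rpow_mul, one_div_mul_cancel (ne_of_gt hlam), ENNReal.rpow_one,
      ENNReal.mul_div_cancel' (fun h => absurd h hκ0) (fun h => absurd h hκt)]
    exact min_le_left r 1
  set δ' : ℝ := (min ω 1).toReal with hδ'def
  have hminω0 : min ω 1 ≠ 0 := by
    intro hc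
    rcases min_eq_iff.mp hc with ⟨h1, _⟩ | ⟨h1, _⟩
    · exact hω0 h1
    · exact one_ne_zero h1
  have hminωt : min ω 1 ≠ ⊤ := by
    intro hc
    have := min_le_right ω 1
    rw [hc] at this
    exact (lt_irrefl (1:ℝ≥0∞)) (lt_of_lt_of_le ENNReal.one_lt_top this)
  have hδ'0 : 0 < δ' := ENNReal.toReal_pos hminω0 hminωt
  have hofReal : ENNReal.ofReal δ' = min ω 1 := by
    rw [hδ'def, ENNReal.ofReal_toReal hminωt]
  -- the infimum over ρ-covers at scale δ' is at most gH
  have hIle : (⨅ (C : ℕ → Set (Digits M)) (_ : Φ '' S ⊆ ⋃ n, C n)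
      (_ : ∀ n, gdiam (rho M) (C n) ≤ ENNReal.ofReal δ'), ∑' n, gdiam (rho M) (C n) ^ t)
      ≤ gHMeasure (rho M) t (Φ '' S) := by
    rw [gHMeasure]
    exact le_iSup₂ (f := fun (d : ℝ) (_ : 0 < d) =>
      ⨅ (C : ℕ → Set (Digits M)) (_ : Φ '' S ⊆ ⋃ n, C n)
      (_ : ∀ n, gdiam (rho M) (C n) ≤ ENNReal.ofReal d), ∑' n, gdiam (rho M) (C n) ^ t) δ' hδ'0
  apply ENNReal.le_of_forall_pos_le_add
  intro ε hε _
  have hε'0 : (ε : ℝ≥0∞) / κ ^ s ≠ 0 := by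
    simp only [ne_eq, ENNReal.div_eq_zero_iff, not_or]
    exact ⟨by exact_mod_cast hε.ne', hκst⟩
  have hIlt : (⨅ (C : ℕ → Set (Digits M)) (_ : Φ '' S ⊆ ⋃ n, C n)
      (_ : ∀ n, gdiam (rho M) (C n) ≤ ENNReal.ofReal δ'), ∑' n, gdiam (rho M) (C n) ^ t)
      < gHMeasure (rho M) t (Φ '' S) + (ε : ℝ≥0∞) / κ ^ s :=
    lt_of_le_of_lt hIle (ENNReal.lt_add_right hgtop hε'0)
  obtain ⟨B, h1⟩ := iInf_lt_iff.mp hIlt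
  obtain ⟨hcovB, h2⟩ := iInf_lt_iff.mp h1
  obtain ⟨hmeshB, h3⟩ := iInf_lt_iff.mp h2
  -- pull back
  set E : ℕ → Set ℝ := fun n => S ∩ Φ ⁻¹' (B n) with hEdef
  have hcovE : S ⊆ ⋃ n, E n := by
    intro p hp
    have : Φ p ∈ Φ '' S := ⟨p, hp, rfl⟩
    obtain ⟨U, ⟨n, rfl⟩, hpU⟩ := hcovB this
    exact Set.mem_iUnion.mpr ⟨n, hp, hpU⟩
  have hdiamE : ∀ n, EMetric.diam (E n) ≤ κ * (gdiam (rho M) (B n)) ^ lam := by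
    intro n
    apply EMetric.diam_le
    rintro p ⟨hp1, hp2⟩ q ⟨hq1, hq2⟩
    refine le_trans (h p hp1 q hq1) ?_
    have h9 : ENNReal.ofReal (rho M (Φ p) (Φ q)) ≤ gdiam (rho M) (B n) :=
      le_gdiam (dist := rho M) (A := B n) hp2 hq2
    exact mul_le_mul_right (ENNReal.rpow_le_rpow h9 hlam.le) κ
  have hmeshE : ∀ n, EMetric.diam (E n) ≤ r := by
    intro n
    refine le_trans (hdiamE n) (le_trans ?_ hωκ)
    apply mul_le_mul_right _ κ
    apply ENNReal.rpow_le_rpow _ hlam.le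
    exact le_trans (hmeshB n) (by rw [hofReal]; exact min_le_left ω 1)
  have hsumE : ∑' n, (⨆ _ : (E n).Nonempty, EMetric.diam (E n) ^ s)
      ≤ κ ^ s * ∑' n, gdiam (rho M) (B n) ^ t := by
    rw [← ENNReal.tsum_mul_left]
    apply ENNReal.tsum_le_tsum
    intro n
    by_cases hne : (E n).Nonempty
    · rw [iSup_pos hne]
      calc EMetric.diam (E n) ^ s ≤ (κ * (gdiam (rho M) (B n)) ^ lam) ^ s :=
            ENNReal.rpow_le_rpow (hdiamE n) hs.le
        _ = κ ^ s * ((gdiam (rho M) (B n)) ^ lam) ^ s := ENNReal.mul_rpow_of_nonneg _ _ hs.le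
        _ = κ ^ s * gdiam (rho M) (B n) ^ t := by
            rw [← ENNReal.rpow_mul]
    · rw [iSup_neg hne]
      exact zero_le
  calc (⨅ (tc : ℕ → Set ℝ) (_ : S ⊆ ⋃ n, tc n) (_ : ∀ n, EMetric.diam (tc n) ≤ r),
        ∑' n, ⨆ _ : (tc n).Nonempty, EMetric.diam (tc n) ^ s)
      ≤ ∑' n, (⨆ _ : (E n).Nonempty, EMetric.diam (E n) ^ s) := by
        refine le_trans (iInf_le _ E) ?_
        refine le_trans (iInf_le _ hcovE) ?_
        exact iInf_le _ hmeshE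
    _ ≤ κ ^ s * ∑' n, gdiam (rho M) (B n) ^ t := hsumE
    _ ≤ κ ^ s * (gHMeasure (rho M) t (Φ '' S) + (ε : ℝ≥0∞) / κ ^ s) := mul_le_mul_right h3.le _
    _ = κ ^ s * gHMeasure (rho M) t (Φ '' S) + (ε : ℝ≥0∞) := by
        rw [mul_add, ENNReal.mul_div_cancel' (fun h => absurd h hκs0) (fun h => absurd h hκst)]

end TR2

section RhoX
variable {M : ℕ}

lemma rho_self (c : Digits M) : rho M c c = 0 := if_pos rfl

lemma rho_eq_of_ne {c d : Digits M} (h : c ≠ d) :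
    rho M c d = (1/((M:ℝ)+1))^(sInf {i | c i ≠ d i} + 1) := by
  rw [rho, if_neg h]
  have e1 : -(((sInf {i | c i ≠ d i} : ℕ) : ℤ) + 1)
      = -(((sInf {i | c i ≠ d i} + 1 : ℕ) : ℤ)) := by push_cast; ring
  rw [e1, zpow_neg, zpow_natCast, one_div_pow, one_div]

lemma rpow_base_change {u v : ℝ} (hu : 1 < u) (hv : 1 < v) (n : ℕ) :
    ((1/u:ℝ)^(n+1)) ^ (Real.log v / Real.log u) = (1/v)^(n+1) := by
  have hu0 : (0:ℝ) < u := by linarith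
  have hv0 : (0:ℝ) < v := by linarith
  have hlu : Real.log u ≠ 0 := ne_of_gt (Real.log_pos hu)
  rw [← Real.rpow_natCast (1/u) (n+1), ← Real.rpow_natCast (1/v) (n+1),
    ← Real.rpow_mul (by positivity : (0:ℝ) ≤ 1/u)]
  rw [Real.rpow_def_of_pos (by positivity : (0:ℝ) < 1/u),
    Real.rpow_def_of_pos (by positivity : (0:ℝ) < 1/v)]
  rw [one_div, one_div, Real.log_inv, Real.log_inv]
  congr 1
  field_simp

end RhoX

set_option maxHeartbeats 2000000 in
/-- Proposition (local dimension estimate): for `x > 0` and `1 < a < b < M+1`,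
`dim_H Φ_x(𝒰(x) ∩ (a,b)) / log b ≤ dim_H (𝒰(x) ∩ (a,b)) ≤ dim_H Φ_x(𝒰(x) ∩ (a,b)) / log a`,
where the image is measured with the metric `ρ`, the subset of `ℝ` with the Euclidean
metric, and logarithms are to base `M+1`. -/
theorem dimH_Ubases_inter_estimate (M : ℕ) (hM : 0 < M) (x : ℝ) (hx : 0 < x) (a b : ℝ)
    (ha : 1 < a) (hab : a < b) (hb : b < (M : ℝ) + 1) :
    gdimH (rho M) (Phi M x '' (Ubases M x ∩ Set.Ioo a b)) /
        ENNReal.ofReal (Real.logb ((M : ℝ) + 1) b) ≤ dimH (Ubases M x ∩ Set.Ioo a b) ∧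
    dimH (Ubases M x ∩ Set.Ioo a b) ≤
      gdimH (rho M) (Phi M x '' (Ubases M x ∩ Set.Ioo a b)) /
        ENNReal.ofReal (Real.logb ((M : ℝ) + 1) a) := by
  have hb1 : 1 < b := lt_trans ha hab
  have hM1 : (1:ℝ) < (M:ℝ) + 1 := by
    have : (1:ℝ) ≤ (M:ℝ) := by exact_mod_cast hM
    linarith
  set S : Set ℝ := Ubases M x ∩ Set.Ioo a b with hSdef
  set Φ : ℝ → Digits M := Phi M x with hΦdef
  obtain ⟨K1, K2, hK1, hK2, hkey⟩ := key_estimate M hM x hx a b ha hab hb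
  -- injectivity of Φ on S
  have hinj : ∀ p q : ℝ, p ∈ S → q ∈ S → p < q → Φ p ≠ Φ q := by
    rintro p q ⟨hpU, hpa, hpb⟩ ⟨hqU, hqa, hqb⟩ hpq heq
    have hp1 : 1 < p := lt_trans ha hpa
    have hpM : p < (M:ℝ) + 1 := lt_trans hpb hb
    have hqM : q < (M:ℝ) + 1 := lt_trans hqb hb
    have hq1 : 1 < q := lt_trans ha hqa
    obtain ⟨hc, _⟩ := phi_spec hp1 hpM hx hpU.2
    obtain ⟨hd, _⟩ := phi_spec hq1 hqM hx hqU.2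
    obtain ⟨j, hj⟩ := exists_nonzero_digit hx hc
    have heq' : Phi M x p = Phi M x q := heq
    have h1 := piQ_sub_ge (b := b) hp1 (le_of_lt hpq) (le_of_lt hqb) hj
    rw [hc] at h1
    rw [heq'] at h1
    rw [hd] at h1
    have h2 : 0 < (q - p) * (1/b)^(j+2) := mul_pos (by linarith) (by positivity)
    linarith
  -- two-sided bound in terms of sInf
  have hbound : ∀ p q : ℝ, p ∈ S → q ∈ S → p < q →
      K1 * (1/b)^(sInf {i | Φ p i ≠ Φ q i} + 1) ≤ q - p ∧
      q - p ≤ K2 * (1/a)^(sInf {i | Φ p i ≠ Φ q i} + 1) := by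
    intro p q hp hq hpq
    have hne := hinj p q hp hq hpq
    have hset : {i | Φ p i ≠ Φ q i}.Nonempty := Function.ne_iff.mp hne
    set n := sInf {i | Φ p i ≠ Φ q i} with hn
    have hmem : Φ p n ≠ Φ q n := Nat.sInf_mem hset
    have hagree : ∀ i < n, Φ p i = Φ q i := fun i hi =>
      not_not.mp (Nat.notMem_of_lt_sInf hi)
    exact hkey p q hp hq hpq n hagree hmem
  -- logs
  have hlogb : 0 < Real.log b := Real.log_pos hb1
  have hloga : 0 < Real.log a := Real.log_pos ha
  have hlogM : 0 < Real.log ((M:ℝ)+1) := Real.log_pos hM1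
  set θb : ℝ := Real.log ((M:ℝ)+1) / Real.log b with hθbdef
  set lama : ℝ := Real.log a / Real.log ((M:ℝ)+1) with hlamdef
  have hθb0 : 0 < θb := div_pos hlogM hlogb
  have hlama0 : 0 < lama := div_pos hloga hlogM
  set η : ℝ≥0∞ := ENNReal.ofReal (1/K1) with hηdef
  have hη0 : η ≠ 0 := (ENNReal.ofReal_pos.mpr (by positivity)).ne'
  have hηt : η ≠ ⊤ := ENNReal.ofReal_ne_top
  set κ : ℝ≥0∞ := ENNReal.ofReal K2 with hκdef
  have hκ0 : κ ≠ 0 := (ENNReal.ofReal_pos.mpr hK2).ne'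
  have hκt : κ ≠ ⊤ := ENNReal.ofReal_ne_top
  -- Hölder hypotheses, for ordered pairs
  have hH1' : ∀ p q : ℝ, p ∈ S → q ∈ S → p < q →
      ENNReal.ofReal (rho M (Φ p) (Φ q)) ≤ (η * edist p q) ^ θb := by
    intro p q hp hq hpq
    have hne := hinj p q hp hq hpq
    set n := sInf {i | Φ p i ≠ Φ q i} with hn
    have hrho : rho M (Φ p) (Φ q) = (1/((M:ℝ)+1))^(n+1) := rho_eq_of_ne hne
    obtain ⟨hlow, _⟩ := hbound p q hp hq hpq
    have h1 : (1/b:ℝ)^(n+1) ≤ (q - p)/K1 := by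
      rw [le_div_iff₀ hK1]
      linarith [hlow]
    have h2 : rho M (Φ p) (Φ q) ≤ ((q-p)/K1) ^ θb := by
      rw [hrho, ← rpow_base_change hb1 hM1 n]
      exact Real.rpow_le_rpow (by positivity) h1 hθb0.le
    have h3 : ENNReal.ofReal (((q-p)/K1) ^ θb) = (η * edist p q) ^ θb := by
      rw [← ENNReal.ofReal_rpow_of_nonneg (div_nonneg (by linarith) hK1.le) hθb0.le]
      congr 1
      rw [edist_dist, Real.dist_eq, abs_of_neg (by linarith : p - q < 0)]
      rw [hηdef, ← ENNReal.ofReal_mul (by positivity)]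
      congr 1
      field_simp
      ring
    calc ENNReal.ofReal (rho M (Φ p) (Φ q)) ≤ ENNReal.ofReal (((q-p)/K1) ^ θb) :=
          ENNReal.ofReal_le_ofReal h2
      _ = (η * edist p q) ^ θb := h3
  have hH1 : ∀ p ∈ S, ∀ q ∈ S, ENNReal.ofReal (rho M (Φ p) (Φ q)) ≤ (η * edist p q) ^ θb := by
    intro p hp q hq
    rcases lt_trichotomy p q with h | h | h
    · exact hH1' p q hp hq h
    · subst h
      rw [rho_self]
      simp
    · have := hH1' q p hq hp h
      have hsymm : rho M (Φ p) (Φ q) = rho M (Φ q) (Φ p) := by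
        unfold rho
        by_cases he : Φ p = Φ q
        · rw [if_pos he, if_pos he.symm]
        · have hsets : {i | Φ p i ≠ Φ q i} = {i | Φ q i ≠ Φ p i} := by
            ext i
            exact ne_comm
          rw [if_neg he, if_neg (Ne.symm he), hsets]
      rw [hsymm, edist_comm]
      exact this
  have hH2' : ∀ p q : ℝ, p ∈ S → q ∈ S → p < q →
      edist p q ≤ κ * (ENNReal.ofReal (rho M (Φ p) (Φ q))) ^ lama := by
    intro p q hp hq hpq
    have hne := hinj p q hp hq hpq
    set n := sInf {i | Φ p i ≠ Φ q i} with hn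
    have hrho : rho M (Φ p) (Φ q) = (1/((M:ℝ)+1))^(n+1) := rho_eq_of_ne hne
    obtain ⟨_, hupp⟩ := hbound p q hp hq hpq
    have h1 : q - p ≤ K2 * (rho M (Φ p) (Φ q)) ^ lama := by
      rw [hrho, rpow_base_change hM1 ha n]
      exact hupp
    calc edist p q = ENNReal.ofReal (q - p) := by
          rw [edist_dist, Real.dist_eq, abs_of_neg (by linarith : p - q < 0)]
          congr 1
          ring
      _ ≤ ENNReal.ofReal (K2 * (rho M (Φ p) (Φ q)) ^ lama) := ENNReal.ofReal_le_ofReal h1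
      _ = κ * (ENNReal.ofReal (rho M (Φ p) (Φ q))) ^ lama := by
          rw [ENNReal.ofReal_mul hK2.le, hκdef,
            ENNReal.ofReal_rpow_of_nonneg ?_ hlama0.le]
          rw [hrho]
          positivity
  have hH2 : ∀ p ∈ S, ∀ q ∈ S,
      edist p q ≤ κ * (ENNReal.ofReal (rho M (Φ p) (Φ q))) ^ lama := by
    intro p hp q hq
    rcases lt_trichotomy p q with h | h | h
    · exact hH2' p q hp hq h
    · subst h
      rw [edist_self]
      exact zero_le
    · have := hH2' q p hq hp h
      have hsymm : rho M (Φ p) (Φ q) = rho M (Φ q) (Φ p) := by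
        unfold rho
        by_cases he : Φ p = Φ q
        · rw [if_pos he, if_pos he.symm]
        · have hsets : {i | Φ p i ≠ Φ q i} = {i | Φ q i ≠ Φ p i} := by
            ext i
            exact ne_comm
          rw [if_neg he, if_neg (Ne.symm he), hsets]
      rw [hsymm, edist_comm]
      exact this
  -- assemble
  have hcb0 : 0 < Real.logb ((M:ℝ)+1) b := Real.logb_pos hM1 hb1
  have hca0 : 0 < Real.logb ((M:ℝ)+1) a := Real.logb_pos hM1 ha
  set cb : ℝ≥0∞ := ENNReal.ofReal (Real.logb ((M:ℝ)+1) b) with hcbdef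
  set ca : ℝ≥0∞ := ENNReal.ofReal (Real.logb ((M:ℝ)+1) a) with hcadef
  have hcb0' : cb ≠ 0 := (ENNReal.ofReal_pos.mpr hcb0).ne'
  have hcbt : cb ≠ ⊤ := ENNReal.ofReal_ne_top
  have hca0' : ca ≠ 0 := (ENNReal.ofReal_pos.mpr hca0).ne'
  have hcat : ca ≠ ⊤ := ENNReal.ofReal_ne_top
  constructor
  · -- first inequality
    rw [ENNReal.div_le_iff_le_mul (Or.inl hcb0') (Or.inl hcbt)]
    rw [gdimH]
    apply iSup₂_le
    intro t' hgt
    rcases eq_or_ne t' 0 with rfl | ht'0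
    · simp
    have ht'pos : (0:ℝ) < (t' : ℝ) := by
      have := zero_lt_iff.mpr ht'0
      exact_mod_cast this
    have htr := gH_le_muH (S := S) (Φ := Φ) ht'pos hθb0 hη0 hηt hH1
    rw [hgt] at htr
    have hμtop : μH[θb * (t':ℝ)] S = ⊤ := by
      by_contra hc
      have h1 : η ^ (θb * (t':ℝ)) * μH[θb * (t':ℝ)] S ≠ ⊤ :=
        ENNReal.mul_ne_top (ENNReal.rpow_ne_top_of_nonneg (by positivity) hηt) hc
      exact h1 (top_le_iff.mp htr)
    set s' : ℝ≥0 := ⟨θb * (t':ℝ), le_of_lt (mul_pos hθb0 ht'pos)⟩ with hs'def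
    have hμ' : μH[(s' : ℝ)] S = ⊤ := hμtop
    have hdim : (s' : ℝ≥0∞) ≤ dimH S := le_dimH_of_hausdorffMeasure_eq_top hμ'
    have hcoe : (t' : ℝ≥0∞) = (s' : ℝ≥0∞) * cb := by
      rw [← ENNReal.ofReal_coe_nnreal, ← ENNReal.ofReal_coe_nnreal, hcbdef,
        ← ENNReal.ofReal_mul (by positivity : (0:ℝ) ≤ ((s' : ℝ≥0) : ℝ))]
      congr 1
      show (t' : ℝ) = (θb * (t':ℝ)) * Real.logb ((M:ℝ)+1) b
      rw [Real.logb, hθbdef]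
      field_simp
    rw [hcoe]
    exact mul_le_mul_left hdim cb
  · -- second inequality
    apply dimH_le
    intro s' hμ'
    rcases eq_or_ne s' 0 with rfl | hs'0
    · simp
    have hs'pos : (0:ℝ) < (s' : ℝ) := by
      have := zero_lt_iff.mpr hs'0
      exact_mod_cast this
    have htr := muH_le_gH (S := S) (Φ := Φ) hs'pos hlama0 hκ0 hκt hH2
    rw [hμ'] at htr
    have hgtop : gHMeasure (rho M) (lama * (s':ℝ)) (Φ '' S) = ⊤ := by
      by_contra hc
      have h1 : κ ^ (s':ℝ) * gHMeasure (rho M) (lama * (s':ℝ)) (Φ '' S) ≠ ⊤ :=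
        ENNReal.mul_ne_top (ENNReal.rpow_ne_top_of_nonneg (by positivity) hκt) hc
      exact h1 (top_le_iff.mp htr)
    set t' : ℝ≥0 := ⟨lama * (s':ℝ), le_of_lt (mul_pos hlama0 hs'pos)⟩ with ht'def
    have hg' : gHMeasure (rho M) ((t' : ℝ≥0) : ℝ) (Φ '' S) = ⊤ := hgtop
    have hle : ((t' : ℝ≥0) : ℝ≥0∞) ≤ gdimH (rho M) (Φ '' S) := by
      rw [gdimH]
      exact le_iSup₂ (f := fun (u : ℝ≥0) (_ : gHMeasure (rho M) (u : ℝ) (Φ '' S) = ⊤) =>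
        (u : ℝ≥0∞)) t' hg'
    rw [ENNReal.le_div_iff_mul_le (Or.inl hca0') (Or.inl hcat)]
    have hcoe : (s' : ℝ≥0∞) * ca = (t' : ℝ≥0∞) := by
      rw [← ENNReal.ofReal_coe_nnreal, ← ENNReal.ofReal_coe_nnreal, hcadef,
        ← ENNReal.ofReal_mul (by positivity : (0:ℝ) ≤ ((s' : ℝ≥0) : ℝ))]
      congr 1
      show (s' : ℝ) * Real.logb ((M:ℝ)+1) a = lama * (s':ℝ)
      rw [Real.logb, hlamdef]
      ring
    rw [hcoe]
    exact hle

end Expansions
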